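/- Let k, ℓ ∈ ℕ with k+ℓ > 2, and let η : ℤ → ℝ satisfy η(0) = 1, η(−n) = η(n), |η(n)| ≤ 1, and the gTM recursion η((k+ℓ)m+r) = (1/(k+ℓ))(α_{k,ℓ,r} η(m) + α_{k,ℓ,k+ℓ−r} η(m+1)). Define Σ(N) = ∑_{n=−N}^{N} η(n)². Then there exists q < k+ℓ (positive) such that Σ((k+ℓ)N) ≤ q·Σ(N) for all N ∈ ℕ. -/

import Mathlib

/-- `α_{k,ℓ,r} = k + ℓ - r - 2 min(k, ℓ, r, k+ℓ-r)`. -/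
def gtmAlpha (k ℓ r : ℤ) : ℤ :=
  k + ℓ - r - 2 * min (min k ℓ) (min r (k + ℓ - r))

lemma gtm_cs_aux (a b x y : ℝ) : (a*x + b*y)^2 ≤ (|a|+|b|) * (|a| * x^2 + |b| * y^2) := by
  nlinarith [le_abs_self (a*b), neg_abs_le (a*b), abs_mul a b, sq_nonneg (x-y),
    sq_nonneg (x+y), sq_abs a, sq_abs b, mul_nonneg (abs_nonneg a) (abs_nonneg b)]

lemma gtm_Icc_insert_top (a b : ℤ) (h : a ≤ b) :
    Finset.Icc a b = insert b (Finset.Icc a (b-1)) := by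
  ext n; simp only [Finset.mem_Icc, Finset.mem_insert]; omega

lemma gtm_sum_block (s : ℤ) (hs : 0 < s) (f : ℤ → ℝ) (a b : ℤ) :
    ∑ n ∈ Finset.Icc (s*a) (s*b - 1), f n
      = ∑ m ∈ Finset.Icc a (b-1), ∑ r ∈ Finset.Ico (0:ℤ) s, f (s*m + r) := by
  rw [← Finset.sum_product']
  apply Finset.sum_nbij' (i := fun n => (n / s, n % s)) (j := fun p => s * p.1 + p.2)
  · intro n hn
    simp only [Finset.mem_Icc] at hn
    simp only [Finset.mem_product, Finset.mem_Icc, Finset.mem_Ico]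
    refine ⟨⟨?_, ?_⟩, Int.emod_nonneg n hs.ne', Int.emod_lt_of_pos n hs⟩
    · exact Int.le_ediv_iff_mul_le hs |>.2 (by linarith [hn.1])
    · have : n / s < b := Int.ediv_lt_iff_lt_mul hs |>.2 (by linarith [hn.2])
      omega
  · rintro ⟨m, r⟩ hp
    simp only [Finset.mem_product, Finset.mem_Icc, Finset.mem_Ico] at hp
    obtain ⟨⟨h1, h2⟩, h3, h4⟩ := hp
    simp only [Finset.mem_Icc]
    constructor
    · nlinarith [mul_le_mul_of_nonneg_left h1 hs.le]
    · nlinarith [mul_le_mul_of_nonneg_left h2 hs.le]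
  · intro n hn
    simp [Int.mul_ediv_add_emod n s]
  · rintro ⟨m, r⟩ hp
    simp only [Finset.mem_product, Finset.mem_Icc, Finset.mem_Ico] at hp
    obtain ⟨⟨h1, h2⟩, h3, h4⟩ := hp
    have hd : (s * m + r) / s = m := by
      rw [add_comm, Int.add_mul_ediv_left _ _ hs.ne', Int.ediv_eq_zero_of_lt h3 h4]
      ring
    have hm : (s * m + r) % s = r := by
      rw [add_comm, Int.add_mul_emod_self_left, Int.emod_eq_of_lt h3 h4]
    simp [hd, hm]
  · intro n hn
    simp [Int.mul_ediv_add_emod n s]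

lemma gtm_alpha_abs_le (k ℓ r : ℤ) (hk : 1 ≤ k) (hl : 1 ≤ ℓ) (h0 : 0 ≤ r) (h1 : r ≤ k+ℓ) :
    |gtmAlpha k ℓ r| ≤ k + ℓ - r := by
  unfold gtmAlpha; rw [abs_le]; omega

lemma gtm_alpha_vals (k ℓ : ℤ) (hk : 1 ≤ k) (hl : 1 ≤ ℓ) (h2 : 3 ≤ k + ℓ) :
    gtmAlpha k ℓ 1 = k + ℓ - 3 ∧ gtmAlpha k ℓ (k+ℓ-1) = -1 ∧ gtmAlpha k ℓ 0 = k + ℓ ∧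
      gtmAlpha k ℓ (k+ℓ) = 0 := by
  unfold gtmAlpha; omega

set_option maxHeartbeats 1000000 in
/-- growth lemma: for `k+ℓ > 2` and `η` satisfying the gTM
recursion (with `η 0 = 1`, symmetric, bounded by `1`), there is a positive
`q < k+ℓ` with `Σ((k+ℓ)N) ≤ q Σ(N)` for all `N ∈ ℕ`, where
`Σ(N) = ∑_{n=-N}^{N} η(n)²`. -/
theorem gtm_sigma_growth (k ℓ : ℕ) (hk : 1 ≤ k) (hℓ : 1 ≤ ℓ) (h2 : 2 < k + ℓ)
    (η : ℤ → ℝ) (hη0 : η 0 = 1) (hsym : ∀ n : ℤ, η (-n) = η n)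
    (hbd : ∀ n : ℤ, |η n| ≤ 1)
    (hrec : ∀ (m r : ℤ), 0 ≤ r → r < (k : ℤ) + ℓ →
      η (((k : ℤ) + ℓ) * m + r) = (1 / ((k : ℝ) + ℓ)) *
        ((gtmAlpha k ℓ r : ℝ) * η m + (gtmAlpha k ℓ ((k : ℤ) + ℓ - r) : ℝ) * η (m + 1))) :
    ∃ q : ℝ, 0 < q ∧ q < (k : ℝ) + ℓ ∧ ∀ N : ℕ, 1 ≤ N →
      (∑ n ∈ Finset.Icc (-(((k + ℓ) * N : ℕ) : ℤ)) (((k + ℓ) * N : ℕ) : ℤ), η n ^ 2) ≤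
        q * ∑ n ∈ Finset.Icc (-(N : ℤ)) (N : ℤ), η n ^ 2 := by
  classical
  set s : ℤ := (k : ℤ) + ℓ with hsdef
  have hs3 : 3 ≤ s := by simp only [hsdef]; exact_mod_cast h2
  have hs : 0 < s := by omega
  have hS : ((s : ℝ)) = (k : ℝ) + ℓ := by simp only [hsdef]; push_cast; ring
  have hSpos : (0 : ℝ) < (s : ℝ) := by exact_mod_cast hs
  have hS3 : (3 : ℝ) ≤ (s : ℝ) := by exact_mod_cast hs3
  have hS2pos : (0 : ℝ) < (s : ℝ) ^ 2 := by positivity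
  set β : ℤ → ℝ := fun r => |((gtmAlpha k ℓ r : ℤ) : ℝ)| with hβdef
  set γ : ℤ → ℝ := fun r => β r + β (s - r) with hγdef
  have hβnn : ∀ r, 0 ≤ β r := fun r => abs_nonneg _
  have hγnn : ∀ r, 0 ≤ γ r := fun r => add_nonneg (hβnn r) (hβnn _)
  have hkZ : (1:ℤ) ≤ (k:ℤ) := by exact_mod_cast hk
  have hlZ : (1:ℤ) ≤ (ℓ:ℤ) := by exact_mod_cast hℓ
  obtain ⟨hα1, hαs1, hα0, hαs⟩ := gtm_alpha_vals k ℓ hkZ hlZ hs3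
  rw [← hsdef] at hα1 hαs1 hα0 hαs
  have hβ0 : β 0 = (s : ℝ) := by
    simp only [hβdef, hα0]
    exact abs_of_nonneg (by exact_mod_cast hs.le)
  have hβs : β s = 0 := by simp only [hβdef, hαs]; simp
  have hγ0 : γ 0 = (s : ℝ) := by simp only [hγdef, sub_zero, hβ0, hβs, add_zero]
  have hγ1 : γ 1 = (s : ℝ) - 2 := by
    simp only [hγdef, hβdef, hα1, hαs1]
    push_cast
    rw [abs_of_nonneg (by linarith), abs_neg, abs_one]
    ring
  have hγle : ∀ r ∈ Finset.Ico (0:ℤ) s, γ r ≤ (s : ℝ) := by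
    intro r hr
    simp only [Finset.mem_Ico] at hr
    have e1 : |gtmAlpha k ℓ r| ≤ s - r :=
      gtm_alpha_abs_le k ℓ r hkZ hlZ hr.1 (le_of_lt hr.2)
    have e2 : |gtmAlpha k ℓ (s - r)| ≤ r := by
      have := gtm_alpha_abs_le k ℓ (s - r) hkZ hlZ (by omega) (by omega)
      omega
    have e1' : β r ≤ ((s - r : ℤ) : ℝ) := by
      simp only [hβdef, ← Int.cast_abs]; exact_mod_cast e1
    have e2' : β (s - r) ≤ ((r : ℤ) : ℝ) := by
      simp only [hβdef, ← Int.cast_abs]; exact_mod_cast e2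
    calc γ r ≤ ((s - r : ℤ) : ℝ) + ((r:ℤ) : ℝ) := add_le_add e1' e2'
      _ = (s : ℝ) := by push_cast; ring
  -- the constants
  set A : ℝ := ∑ r ∈ Finset.Ico (0:ℤ) s, γ r * β r with hAdef
  set B : ℝ := ∑ r ∈ Finset.Ico (0:ℤ) s, γ r * β (s - r) with hBdef
  set G : ℝ := ∑ r ∈ Finset.Ico (0:ℤ) s, γ r ^ 2 with hGdef
  have hAB : A + B = G := by
    simp only [hAdef, hBdef, hGdef, ← Finset.sum_add_distrib]
    refine Finset.sum_congr rfl fun r _ => ?_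
    simp only [hγdef]; ring
  have h0mem : (0:ℤ) ∈ Finset.Ico (0:ℤ) s := by simp only [Finset.mem_Ico]; omega
  have h1mem : (1:ℤ) ∈ Finset.Ico (0:ℤ) s := by simp only [Finset.mem_Ico]; omega
  have hA : (s:ℝ)^2 ≤ A := by
    have h := Finset.single_le_sum (f := fun r => γ r * β r)
      (fun r _ => mul_nonneg (hγnn r) (hβnn r)) h0mem
    calc (s:ℝ)^2 = γ 0 * β 0 := by rw [hγ0, hβ0]; ring
      _ ≤ A := h
  have hBnn : 0 ≤ B := Finset.sum_nonneg fun r _ => mul_nonneg (hγnn r) (hβnn _)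
  have hGge : (s:ℝ)^2 ≤ G := by
    have h := Finset.single_le_sum (f := fun r => γ r ^ 2) (fun r _ => sq_nonneg _) h0mem
    calc (s:ℝ)^2 = γ 0 ^ 2 := by rw [hγ0]
      _ ≤ G := h
  have hcard : (((Finset.Ico (0:ℤ) s).card : ℕ) : ℝ) = (s : ℝ) := by
    rw [Int.card_Ico, sub_zero]
    exact_mod_cast congrArg (fun z : ℤ => (z : ℝ)) (Int.toNat_of_nonneg hs.le)
  have hGlt : G < (s:ℝ) * (s:ℝ)^2 := by
    have hsplit : G = γ 1 ^ 2 + ∑ r ∈ (Finset.Ico (0:ℤ) s).erase 1, γ r ^ 2 := by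
      rw [hGdef, ← Finset.add_sum_erase _ _ h1mem]
    have hbound : ∑ r ∈ (Finset.Ico (0:ℤ) s).erase 1, γ r ^ 2
        ≤ (((Finset.Ico (0:ℤ) s).erase 1).card : ℝ) * (s:ℝ)^2 := by
      rw [← nsmul_eq_mul]
      apply Finset.sum_le_card_nsmul
      intro r hr
      have h1 := hγle r (Finset.mem_of_mem_erase hr)
      have h2 := hγnn r
      nlinarith
    have h1c : 1 ≤ (Finset.Ico (0:ℤ) s).card := Finset.card_pos.2 ⟨1, h1mem⟩
    have hcard' : (((Finset.Ico (0:ℤ) s).erase 1).card : ℝ) = (s:ℝ) - 1 := by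
      rw [Finset.card_erase_of_mem h1mem, Nat.cast_sub h1c, hcard, Nat.cast_one]
    rw [hcard'] at hbound
    rw [hsplit, hγ1]
    nlinarith
  -- choose q
  refine ⟨G / (s:ℝ)^2, div_pos (lt_of_lt_of_le hS2pos hGge) hS2pos, ?_, ?_⟩
  · rw [← hS, div_lt_iff₀ hS2pos]
    linarith [hGlt]
  -- main estimate
  intro N hN
  set M : ℤ := (N : ℤ) with hMdef
  have hM : 1 ≤ M := by simp only [hMdef]; exact_mod_cast hN
  have hcastN : (((k + ℓ) * N : ℕ) : ℤ) = s * M := by simp only [hsdef, hMdef]; push_cast; ring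
  rw [hcastN]
  -- η at multiples of s
  have hηtop : η (s * M) = η M := by
    have h := hrec M 0 le_rfl hs
    rw [add_zero, sub_zero] at h
    rw [h, hα0, hαs]
    push_cast
    rw [← hS]
    field_simp
    ring
  -- split off top term of big sum
  have hsplitbig : ∑ n ∈ Finset.Icc (-(s*M)) (s*M), η n ^ 2
      = η (s*M) ^ 2 + ∑ n ∈ Finset.Icc (-(s*M)) (s*M - 1), η n ^ 2 := by
    rw [gtm_Icc_insert_top _ _ (by nlinarith [mul_le_mul_of_nonneg_left hM hs.le]),
      Finset.sum_insert (by simp only [Finset.mem_Icc]; omega)]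
  -- block decomposition
  have hblock : ∑ n ∈ Finset.Icc (-(s*M)) (s*M - 1), η n ^ 2
      = ∑ m ∈ Finset.Icc (-M) (M-1), ∑ r ∈ Finset.Ico (0:ℤ) s, η (s*m + r) ^ 2 := by
    have h := gtm_sum_block s hs (fun n => η n ^ 2) (-M) M
    rw [mul_neg] at h
    exact h
  -- pointwise bound
  have hpt : ∀ m : ℤ, ∀ r ∈ Finset.Ico (0:ℤ) s, η (s*m + r) ^ 2
      ≤ γ r * (β r * η m ^ 2 + β (s - r) * η (m+1) ^ 2) / (s:ℝ)^2 := by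
    intro m r hr
    simp only [Finset.mem_Ico] at hr
    have h := hrec m r hr.1 hr.2
    rw [h, ← hS]
    rw [mul_pow, div_pow, one_pow]
    rw [div_mul_eq_mul_div, one_mul]
    gcongr
    simp only [hγdef, hβdef]
    exact gtm_cs_aux _ _ _ _
  -- sum the pointwise bound
  set Sig : ℝ := ∑ n ∈ Finset.Icc (-M) M, η n ^ 2 with hSigdef
  set P : ℝ := ∑ m ∈ Finset.Icc (-M) (M-1), η m ^ 2 with hPdef
  set R : ℝ := ∑ m ∈ Finset.Icc (-M) (M-1), η (m+1) ^ 2 with hRdef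
  have hsum1 : ∑ m ∈ Finset.Icc (-M) (M-1), ∑ r ∈ Finset.Ico (0:ℤ) s, η (s*m + r) ^ 2
      ≤ (A * P + B * R) / (s:ℝ)^2 := by
    have step1 : ∀ m ∈ Finset.Icc (-M) (M-1),
        ∑ r ∈ Finset.Ico (0:ℤ) s, η (s*m + r) ^ 2
        ≤ (A * η m ^ 2 + B * η (m+1) ^ 2) / (s:ℝ)^2 := by
      intro m _
      calc ∑ r ∈ Finset.Ico (0:ℤ) s, η (s*m + r) ^ 2
          ≤ ∑ r ∈ Finset.Ico (0:ℤ) s,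
            γ r * (β r * η m ^ 2 + β (s - r) * η (m+1) ^ 2) / (s:ℝ)^2 :=
            Finset.sum_le_sum (hpt m)
        _ = (A * η m ^ 2 + B * η (m+1) ^ 2) / (s:ℝ)^2 := by
            rw [← Finset.sum_div]
            congr 1
            rw [hAdef, hBdef, Finset.sum_mul, Finset.sum_mul, ← Finset.sum_add_distrib]
            refine Finset.sum_congr rfl fun r _ => by ring
    calc ∑ m ∈ Finset.Icc (-M) (M-1), ∑ r ∈ Finset.Ico (0:ℤ) s, η (s*m + r) ^ 2
        ≤ ∑ m ∈ Finset.Icc (-M) (M-1), (A * η m ^ 2 + B * η (m+1) ^ 2) / (s:ℝ)^2 :=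
          Finset.sum_le_sum step1
      _ = (A * P + B * R) / (s:ℝ)^2 := by
          rw [← Finset.sum_div]
          congr 1
          rw [hPdef, hRdef, Finset.mul_sum, Finset.mul_sum, ← Finset.sum_add_distrib]
  -- relations between P, R, Sig
  have hPSig : Sig = η M ^ 2 + P := by
    rw [hSigdef, hPdef, gtm_Icc_insert_top (-M) M (by omega),
      Finset.sum_insert (by simp only [Finset.mem_Icc]; omega)]
  have hRSig : R ≤ Sig := by
    have hre : R = ∑ n ∈ Finset.Icc (-M + 1) (M - 1 + 1), η n ^ 2 := by
      rw [hRdef, ← Finset.map_add_right_Icc _ _ 1, Finset.sum_map]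
      simp only [addRightEmbedding_apply]
    rw [hre, hSigdef, show M - 1 + 1 = M from by ring]
    apply Finset.sum_le_sum_of_subset_of_nonneg (Finset.Icc_subset_Icc (by omega) le_rfl)
    intro n _ _
    exact sq_nonneg _
  have hPnn : 0 ≤ P := Finset.sum_nonneg fun m _ => sq_nonneg _
  -- put it all together
  rw [hsplitbig, hblock, hηtop]
  have hfinal : η M ^ 2 + (A * P + B * R) / (s:ℝ)^2 ≤ G / (s:ℝ)^2 * Sig := by
    rw [div_mul_eq_mul_div, ← hAB]
    have e : η M ^ 2 = η M ^ 2 * (s:ℝ)^2 / (s:ℝ)^2 := by field_simp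
    rw [e, ← add_div, div_le_div_iff₀ hS2pos hS2pos]
    have key1 : B * R ≤ B * Sig := mul_le_mul_of_nonneg_left hRSig hBnn
    have key2 : 0 ≤ η M ^ 2 * (A - (s:ℝ)^2) := mul_nonneg (sq_nonneg _) (by linarith)
    have hAP : A * P = A * Sig - A * η M ^ 2 := by rw [hPSig]; ring
    have hnum : η M ^ 2 * (s:ℝ)^2 + (A * P + B * R) ≤ (A + B) * Sig := by nlinarith [hAP, key1, key2]
    exact mul_le_mul_of_nonneg_right hnum hS2pos.le
  linarith [hsum1, hfinal]
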